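/- For all x ∈ [0, π/2], x + min(2·sin x, 2·cos x) ≤ π/4 + √2. -/

import Mathlib

open Real

/-- For all `x ∈ [0, π/2]`, `x + min (2 sin x) (2 cos x) ≤ π/4 + √2`. -/
theorem wireless_worst_case_bound (x : ℝ) (hx : x ∈ Set.Icc 0 (π / 2)) :
    x + min (2 * Real.sin x) (2 * Real.cos x) ≤ π / 4 + Real.sqrt 2 := by
  obtain ⟨hx0, hx2⟩ := hx
  have hpi : (3.14 : ℝ) < π := by linarith [Real.pi_gt_d6]
  have hpi' : π < 3.15 := by linarith [Real.pi_lt_d2]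
  have hs2 : (1.414 : ℝ) ≤ Real.sqrt 2 := by
    nlinarith [Real.sq_sqrt (by norm_num : (2:ℝ) ≥ 0), Real.sqrt_nonneg 2]
  have hs2' : Real.sqrt 2 ≤ 1.415 := by
    nlinarith [Real.sq_sqrt (by norm_num : (2:ℝ) ≥ 0), Real.sqrt_nonneg 2]
  rcases le_total x (π / 4) with h | h
  · -- use sin branch
    have hmin : min (2 * Real.sin x) (2 * Real.cos x) ≤ 2 * Real.sin x := min_le_left _ _
    have hsin : Real.sin x ≤ Real.sin (π / 4) := by
      apply Real.sin_le_sin_of_le_of_le_pi_div_two (by linarith) (by linarith) h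
    rw [Real.sin_pi_div_four] at hsin
    have : Real.sqrt 2 / 2 * 2 = Real.sqrt 2 := by ring
    linarith
  · -- use cos branch
    obtain ⟨t, rfl⟩ : ∃ t : ℝ, x = t + π / 4 := ⟨x - π / 4, by ring⟩
    have ht0 : 0 ≤ t := by linarith
    have ht1 : t ≤ π / 4 := by linarith
    have hmin : min (2 * Real.sin (t + π / 4)) (2 * Real.cos (t + π / 4))
        ≤ 2 * Real.cos (t + π / 4) := min_le_right _ _
    have hcos : Real.cos (t + π / 4) = Real.sqrt 2 / 2 * (Real.cos t - Real.sin t) := by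
      rw [Real.cos_add, Real.cos_pi_div_four, Real.sin_pi_div_four]; ring
    have hct : Real.cos t ≤ 1 := Real.cos_le_one t
    have key : t ≤ Real.sqrt 2 * Real.sin t := by
      rcases eq_or_lt_of_le ht0 with h0 | h0
      · simp [← h0]
      · have ht1' : t ≤ 1 := by linarith
        have hsg : t - t ^ 3 / 4 < Real.sin t := by nlinarith [Real.sin_gt_sub_cube h0, pow_pos h0 3]
        have htsq : t ^ 2 ≤ 0.63 := by nlinarith
        have h1 : Real.sqrt 2 * (t - t ^ 3 / 4) ≤ Real.sqrt 2 * Real.sin t := by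
          nlinarith [Real.sqrt_nonneg 2]
        have h2 : t ≤ Real.sqrt 2 * (t - t ^ 3 / 4) := by
          nlinarith [mul_nonneg ht0 (by linarith : (0:ℝ) ≤ 0.63 - t ^ 2),
            mul_nonneg ht0 (by linarith : (0:ℝ) ≤ Real.sqrt 2 - 1.414),
            mul_nonneg (mul_nonneg ht0 (mul_nonneg ht0 ht0))
              (by linarith : (0:ℝ) ≤ 1.415 - Real.sqrt 2)]
        exact h2.trans h1
    have hc2 : 2 * Real.cos (t + π / 4)
        = Real.sqrt 2 * Real.cos t - Real.sqrt 2 * Real.sin t := by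
      rw [hcos]; ring
    have hcc : Real.sqrt 2 * Real.cos t ≤ Real.sqrt 2 := by
      nlinarith [Real.sqrt_nonneg 2]
    linarith
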